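/- Let X ≥ 0 be a random variable and g : ℝ₊ → ℝ₊ a function such that E[e^{tX}] ≤ e^{t g(t) E[X]} for all t ≥ 0. Then for all t ≥ 0, E[e^{t√X}] ≤ exp(t √(g(2t) + g(t)) √(E[X])) + e^t. -/

import Mathlib

open MeasureTheory Real

/-- Exponential moment bound for `√X`: if `X ≥ 0` and
`E[e^{tX}] ≤ e^{t g(t) E[X]}` for all `t ≥ 0`, then for all `t ≥ 0`,
`E[e^{t√X}] ≤ exp(t √(g(2t)+g(t)) √(E[X])) + e^t`. -/
theorem stmt6 {Ω : Type*} [MeasurableSpace Ω]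
    (μ : Measure Ω) [IsProbabilityMeasure μ]
    (X : Ω → ℝ) (hXm : Measurable X) (hX0 : ∀ ω, 0 ≤ X ω) (hXi : Integrable X μ)
    (g : ℝ → ℝ) (hg0 : ∀ t, 0 ≤ t → 0 ≤ g t)
    (hint : ∀ t : ℝ, 0 ≤ t → Integrable (fun ω => exp (t * X ω)) μ)
    (hbound : ∀ t : ℝ, 0 ≤ t →
      (∫ ω, exp (t * X ω) ∂μ) ≤ exp (t * g t * ∫ ω, X ω ∂μ)) :
    ∀ t : ℝ, 0 ≤ t →
      (∫ ω, exp (t * Real.sqrt (X ω)) ∂μ)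
        ≤ exp (t * Real.sqrt (g (2 * t) + g t) * Real.sqrt (∫ ω, X ω ∂μ)) + exp t := by
  intro t ht
  have h2t : (0:ℝ) ≤ 2 * t := by linarith
  set m := ∫ ω, X ω ∂μ with hmdef
  have hm0 : 0 ≤ m := integral_nonneg hX0
  have hGt : 0 ≤ g t := hg0 t ht
  have hG2t : 0 ≤ g (2 * t) := hg0 _ h2t
  set α := g t * m with hαdef
  set β := g (2 * t) * m with hβdef
  have hα : 0 ≤ α := mul_nonneg hGt hm0
  have hβ : 0 ≤ β := mul_nonneg hG2t hm0
  set C := exp (t * Real.sqrt (g (2 * t) + g t) * Real.sqrt m) with hCdef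
  -- geometric mean lemma
  have gm : ∀ A B : ℝ, exp ((A + B) / 2) ≤ (exp A + exp B) / 2 := by
    intro A B
    have h := sq_nonneg (exp (A / 2) - exp (B / 2))
    have e1 : exp (A / 2) * exp (A / 2) = exp A := by rw [← exp_add]; ring_nf
    have e2 : exp (B / 2) * exp (B / 2) = exp B := by rw [← exp_add]; ring_nf
    have e3 : exp (A / 2) * exp (B / 2) = exp ((A + B) / 2) := by rw [← exp_add]; ring_nf
    nlinarith
  -- pointwise key bound
  have key : ∀ ω, exp (t * Real.sqrt (X ω)) ≤
      C + (exp t / 2) * (exp (-(2 * t * β)) * exp (2 * t * X ω)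
        + exp (-(t * α)) * exp (t * X ω)) := by
    intro ω
    set x := X ω with hxdef
    have hx0 : 0 ≤ x := hX0 ω
    set y := Real.sqrt x with hydef
    have hy0 : 0 ≤ y := Real.sqrt_nonneg x
    have hy2 : y ^ 2 = x := Real.sq_sqrt hx0
    have hpos : (0:ℝ) < exp t / 2 * (exp (-(2 * t * β)) * exp (2 * t * x)
        + exp (-(t * α)) * exp (t * x)) := by positivity
    rcases le_or_gt y (Real.sqrt ((g (2 * t) + g t) * m)) with h | h
    · have h1 : exp (t * y) ≤ C := by
        rw [hCdef]
        apply exp_le_exp.mpr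
        rw [mul_assoc, ← Real.sqrt_mul (by positivity)]
        exact mul_le_mul_of_nonneg_left h ht
      linarith
    · have hsq : ((g (2 * t) + g t) * m) ≤ x := by
        have h2 : Real.sqrt ((g (2 * t) + g t) * m) ^ 2 ≤ y ^ 2 :=
          pow_le_pow_left₀ (Real.sqrt_nonneg _) h.le 2
        rwa [Real.sq_sqrt (by positivity), hy2] at h2
      have hxge : β + α ≤ x := by
        have : (g (2 * t) + g t) * m = β + α := by rw [hβdef, hαdef]; ring
        linarith [this ▸ hsq]
      have hA : exp (t * y) ≤ exp (t + ((2 * t * x - 2 * t * β) + (t * x - t * α)) / 2) := by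
        apply exp_le_exp.mpr
        have h1 : 0 ≤ t * (y - 1) ^ 2 := mul_nonneg ht (sq_nonneg _)
        have h2 : 0 ≤ t * (x - (β + α)) := mul_nonneg ht (by linarith)
        have h3 : 0 ≤ t * α := mul_nonneg ht hα
        have h4 : t * y ^ 2 = t * x := by rw [hy2]
        nlinarith
      have hB : exp (t + ((2 * t * x - 2 * t * β) + (t * x - t * α)) / 2)
          ≤ exp t / 2 * (exp (-(2 * t * β)) * exp (2 * t * x)
            + exp (-(t * α)) * exp (t * x)) := by
        rw [← exp_add, ← exp_add, exp_add]
        have := gm (-(2 * t * β) + 2 * t * x) (-(t * α) + t * x)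
        have heq : (-(2 * t * β) + 2 * t * x + (-(t * α) + t * x)) / 2
            = ((2 * t * x - 2 * t * β) + (t * x - t * α)) / 2 := by ring
        rw [heq] at this
        calc exp t * exp (((2 * t * x - 2 * t * β) + (t * x - t * α)) / 2)
            ≤ exp t * ((exp (-(2 * t * β) + 2 * t * x) + exp (-(t * α) + t * x)) / 2) :=
              mul_le_mul_of_nonneg_left this (exp_pos t).le
          _ = exp t / 2 * (exp (-(2 * t * β) + 2 * t * x) + exp (-(t * α) + t * x)) := by ring
      have hC0 : 0 < C := exp_pos _
      linarith [hA.trans hB]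
  -- integrability
  have hIntt := hint t ht
  have hInt2t := hint (2 * t) h2t
  have hRint : Integrable (fun ω => C + (exp t / 2) * (exp (-(2 * t * β)) * exp (2 * t * X ω)
      + exp (-(t * α)) * exp (t * X ω))) μ := by
    apply (integrable_const C).add
    exact (((hInt2t.const_mul (exp (-(2 * t * β)))).add
      (hIntt.const_mul (exp (-(t * α))))).const_mul (exp t / 2))
  have hmeas : Measurable fun ω => exp (t * Real.sqrt (X ω)) :=
    (measurable_const.mul (Real.continuous_sqrt.measurable.comp hXm)).exp
  have hLint : Integrable (fun ω => exp (t * Real.sqrt (X ω))) μ := by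
    apply Integrable.mono' (hIntt.const_mul (exp t)) hmeas.aestronglyMeasurable
    filter_upwards with ω
    rw [Real.norm_eq_abs, Real.abs_exp, ← Real.exp_add]
    apply exp_le_exp.mpr
    have hx0 : 0 ≤ X ω := hX0 ω
    have hs : Real.sqrt (X ω) ≤ 1 + X ω := by
      nlinarith [Real.sq_sqrt hx0, Real.sqrt_nonneg (X ω), sq_nonneg (Real.sqrt (X ω) - 1)]
    nlinarith [mul_nonneg ht (sub_nonneg.mpr hs)]
  have hb1 : exp (-(2 * t * β)) * (∫ ω, exp (2 * t * X ω) ∂μ) ≤ 1 := by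
    calc exp (-(2 * t * β)) * (∫ ω, exp (2 * t * X ω) ∂μ)
        ≤ exp (-(2 * t * β)) * exp (2 * t * g (2 * t) * m) :=
          mul_le_mul_of_nonneg_left (hbound (2 * t) h2t) (exp_pos _).le
      _ = 1 := by rw [← exp_add, hβdef]; rw [show -(2 * t * (g (2 * t) * m)) + 2 * t * g (2 * t) * m = 0 by ring, exp_zero]
  have hb2 : exp (-(t * α)) * (∫ ω, exp (t * X ω) ∂μ) ≤ 1 := by
    calc exp (-(t * α)) * (∫ ω, exp (t * X ω) ∂μ)
        ≤ exp (-(t * α)) * exp (t * g t * m) :=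
          mul_le_mul_of_nonneg_left (hbound t ht) (exp_pos _).le
      _ = 1 := by rw [← exp_add, hαdef]; rw [show -(t * (g t * m)) + t * g t * m = 0 by ring, exp_zero]
  calc (∫ ω, exp (t * Real.sqrt (X ω)) ∂μ)
      ≤ ∫ ω, (C + (exp t / 2) * (exp (-(2 * t * β)) * exp (2 * t * X ω)
        + exp (-(t * α)) * exp (t * X ω))) ∂μ := integral_mono hLint hRint key
    _ = C + (exp t / 2) * (exp (-(2 * t * β)) * (∫ ω, exp (2 * t * X ω) ∂μ)
        + exp (-(t * α)) * (∫ ω, exp (t * X ω) ∂μ)) := by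
        have i1 : Integrable (fun ω => exp (-(2 * t * β)) * exp (2 * t * X ω)) μ :=
          hInt2t.const_mul _
        have i2 : Integrable (fun ω => exp (-(t * α)) * exp (t * X ω)) μ :=
          hIntt.const_mul _
        have i3 : Integrable (fun ω => exp (-(2 * t * β)) * exp (2 * t * X ω)
            + exp (-(t * α)) * exp (t * X ω)) μ := i1.add i2
        have i4 : Integrable (fun ω => (exp t / 2) * (exp (-(2 * t * β)) * exp (2 * t * X ω)
            + exp (-(t * α)) * exp (t * X ω))) μ := i3.const_mul _
        rw [integral_add (integrable_const C) i4, integral_const, probReal_univ,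
          integral_const_mul, integral_add i1 i2, integral_const_mul, integral_const_mul]
        simp
    _ ≤ C + (exp t / 2) * (1 + 1) := by
        have hh : exp (-(2 * t * β)) * (∫ ω, exp (2 * t * X ω) ∂μ)
            + exp (-(t * α)) * (∫ ω, exp (t * X ω) ∂μ) ≤ 1 + 1 := add_le_add hb1 hb2
        have : (0:ℝ) < exp t / 2 := by positivity
        nlinarith
    _ = C + exp t := by ring
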